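/- For any r ≥ 2, the sum of |k|^{-2} over nonzero lattice points k ∈ ℤ² with 0 < |k| ≤ r is at most 4.4 + 2π ln(r + 1/√2). -/

import Mathlib

open Real Finset


lemma arctan_lb {x : ℝ} (hx : 0 ≤ x) : x - x^3/3 ≤ Real.arctan x := by
  have key : ∀ y : ℝ, HasDerivAt (fun t => Real.arctan t - t + t^3/3) (y^4/(1+y^2)) y := by
    intro y
    have h1 : HasDerivAt (fun t : ℝ => Real.arctan t - t + t^3/3)
        (1/(1+y^2) - 1 + (3:ℕ) * y ^ (3-1) * 1 / 3) y :=
      ((Real.hasDerivAt_arctan y).sub (hasDerivAt_id y)).add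
        (((hasDerivAt_id y).pow 3).div_const 3)
    convert h1 using 1
    have : (0:ℝ) < 1 + y^2 := by positivity
    field_simp
    ring
  have mono : Monotone (fun t => Real.arctan t - t + t^3/3) := by
    apply monotone_of_deriv_nonneg
    · exact fun y => (key y).differentiableAt
    · intro y
      rw [(key y).deriv]
      positivity
  have := mono hx
  simp only [Real.arctan_zero] at this
  norm_num at this
  linarith

lemma arctan_diff (n j : ℕ) (hn : 1 ≤ n) :
    Real.arctan ((n:ℝ)/((n:ℝ)^2 + (j:ℝ)*((j:ℝ)+1))) =
      Real.arctan (((j:ℝ)+1)/(n:ℝ)) - Real.arctan ((j:ℝ)/(n:ℝ)) := by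
  have hn0 : (0:ℝ) < (n:ℝ) := by exact_mod_cast hn
  have hj0 : (0:ℝ) ≤ (j:ℝ) := Nat.cast_nonneg j
  have hmul : (((j:ℝ)+1)/(n:ℝ)) * (-((j:ℝ)/(n:ℝ))) < 1 := by
    have : (((j:ℝ)+1)/(n:ℝ)) * (((j:ℝ)/(n:ℝ))) ≥ 0 := by positivity
    nlinarith
  have h := Real.arctan_add hmul
  rw [Real.arctan_neg] at h
  rw [sub_eq_add_neg, h]
  have hM : (0:ℝ) < (n:ℝ)^2 + (j:ℝ)*((j:ℝ)+1) := by positivity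
  have harg : (((j:ℝ)+1)/(n:ℝ) + -((j:ℝ)/(n:ℝ)))/(1 - ((j:ℝ)+1)/(n:ℝ) * -((j:ℝ)/(n:ℝ)))
      = (n:ℝ)/((n:ℝ)^2 + (j:ℝ)*((j:ℝ)+1)) := by
    rw [div_eq_div_iff (by nlinarith) (ne_of_gt hM)]
    field_simp
    ring
  rw [harg]

lemma key_ineq (n j : ℕ) (hn : 1 ≤ n) (hj : j < n) :
    ((n:ℝ)^2 + (j:ℝ)^2)⁻¹ + ((n:ℝ)^2 + ((j:ℝ)+1)^2)⁻¹ ≤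
      (2/(n:ℝ)) * (Real.arctan (((j:ℝ)+1)/(n:ℝ)) - Real.arctan ((j:ℝ)/(n:ℝ)))
        + 2*(n:ℝ)^2/(3*((n:ℝ)^2 + (j:ℝ)*((j:ℝ)+1))^3) := by
  have hn0 : (0:ℝ) < (n:ℝ) := by exact_mod_cast hn
  have hj0 : (0:ℝ) ≤ (j:ℝ) := Nat.cast_nonneg j
  have hjn : (j:ℝ) + 1 ≤ (n:ℝ) := by exact_mod_cast hj
  set M : ℝ := (n:ℝ)^2 + (j:ℝ)*((j:ℝ)+1) with hMdef
  have hM : (0:ℝ) < M := by positivity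
  have hMn : M ≥ (n:ℝ)^2 := by nlinarith
  have h1 : (n:ℝ)/M - ((n:ℝ)/M)^3/3 ≤ Real.arctan ((n:ℝ)/M) := arctan_lb (by positivity)
  have h2 := arctan_diff n j hn
  rw [← h2]
  have lhs_le : ((n:ℝ)^2 + (j:ℝ)^2)⁻¹ + ((n:ℝ)^2 + ((j:ℝ)+1)^2)⁻¹ ≤ 2/M := by
    have hA : (0:ℝ) < (n:ℝ)^2 + (j:ℝ)^2 := by positivity
    have hB : (0:ℝ) < (n:ℝ)^2 + ((j:ℝ)+1)^2 := by positivity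
    rw [inv_eq_one_div, inv_eq_one_div, div_add_div _ _ (ne_of_gt hA) (ne_of_gt hB),
      div_le_div_iff₀ (by positivity) hM]
    have hjj : (j:ℝ)*((j:ℝ)+1) ≤ (n:ℝ)^2 := by nlinarith
    nlinarith [sq_nonneg ((j:ℝ) - (n:ℝ))]
  calc ((n:ℝ)^2 + (j:ℝ)^2)⁻¹ + ((n:ℝ)^2 + ((j:ℝ)+1)^2)⁻¹ ≤ 2/M := lhs_le
    _ ≤ (2/(n:ℝ)) * Real.arctan ((n:ℝ)/M) + 2*(n:ℝ)^2/(3*M^3) := by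
        have : (2/(n:ℝ)) * ((n:ℝ)/M - ((n:ℝ)/M)^3/3) ≤ (2/(n:ℝ)) * Real.arctan ((n:ℝ)/M) := by
          apply mul_le_mul_of_nonneg_left h1 (by positivity)
        have he : (2/(n:ℝ)) * ((n:ℝ)/M - ((n:ℝ)/M)^3/3) = 2/M - 2*(n:ℝ)^2/(3*M^3) := by
          field_simp
        linarith

lemma sum_pairs (n : ℕ) (hn : 1 ≤ n) :
    ∑ j ∈ Finset.range n, (((n:ℝ)^2+(j:ℝ)^2)⁻¹ + ((n:ℝ)^2+((j:ℝ)+1)^2)⁻¹) ≤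
      π/(2*(n:ℝ)) + 2/(3*(n:ℝ)^3) := by
  have hn0 : (0:ℝ) < (n:ℝ) := by exact_mod_cast hn
  have step : ∀ j ∈ Finset.range n,
      ((n:ℝ)^2+(j:ℝ)^2)⁻¹ + ((n:ℝ)^2+((j:ℝ)+1)^2)⁻¹ ≤
        ((2/(n:ℝ)) * (Real.arctan ((((j+1):ℕ):ℝ)/(n:ℝ)) - Real.arctan ((j:ℝ)/(n:ℝ)))
          + 2/(3*(n:ℝ)^4)) := by
    intro j hj
    rw [Finset.mem_range] at hj
    have h := key_ineq n j hn hj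
    have hcast : (((j+1):ℕ):ℝ) = (j:ℝ)+1 := by push_cast; ring
    rw [hcast]
    have hM : (n:ℝ)^2 ≤ (n:ℝ)^2 + (j:ℝ)*((j:ℝ)+1) := by
      have : (0:ℝ) ≤ (j:ℝ)*((j:ℝ)+1) := by positivity
      linarith
    have herr : 2*(n:ℝ)^2/(3*((n:ℝ)^2 + (j:ℝ)*((j:ℝ)+1))^3) ≤ 2/(3*(n:ℝ)^4) := by
      rw [div_le_div_iff₀ (by positivity) (by positivity)]
      have h6 : ((n:ℝ)^2)^3 ≤ ((n:ℝ)^2 + (j:ℝ)*((j:ℝ)+1))^3 := by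
        apply pow_le_pow_left₀ (by positivity) hM
      nlinarith
    linarith
  calc ∑ j ∈ Finset.range n, (((n:ℝ)^2+(j:ℝ)^2)⁻¹ + ((n:ℝ)^2+((j:ℝ)+1)^2)⁻¹)
      ≤ ∑ j ∈ Finset.range n, ((2/(n:ℝ)) * (Real.arctan ((((j+1):ℕ):ℝ)/(n:ℝ)) - Real.arctan ((j:ℝ)/(n:ℝ)))
          + 2/(3*(n:ℝ)^4)) := Finset.sum_le_sum step
    _ = (2/(n:ℝ)) * ∑ j ∈ Finset.range n, (Real.arctan ((((j+1):ℕ):ℝ)/(n:ℝ)) - Real.arctan ((j:ℝ)/(n:ℝ)))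
          + (n:ℝ) * (2/(3*(n:ℝ)^4)) := by
        rw [Finset.sum_add_distrib, Finset.mul_sum, Finset.sum_const, Finset.card_range, nsmul_eq_mul]
    _ ≤ π/(2*(n:ℝ)) + 2/(3*(n:ℝ)^3) := by
        have htel : ∑ j ∈ Finset.range n, (Real.arctan ((((j+1):ℕ):ℝ)/(n:ℝ)) - Real.arctan ((j:ℝ)/(n:ℝ)))
            = Real.arctan ((n:ℝ)/(n:ℝ)) - Real.arctan (((0:ℕ):ℝ)/(n:ℝ)) := by
          exact Finset.sum_range_sub (fun j => Real.arctan ((j:ℝ)/(n:ℝ))) n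
        rw [htel, div_self (ne_of_gt hn0), Real.arctan_one, Nat.cast_zero, zero_div,
          Real.arctan_zero, sub_zero]
        have : (2/(n:ℝ)) * (π/4) = π/(2*(n:ℝ)) := by field_simp; ring
        rw [this]
        have : (n:ℝ) * (2/(3*(n:ℝ)^4)) = 2/(3*(n:ℝ)^3) := by field_simp
        rw [this]

noncomputable def G : ℤ × ℤ → ℝ := fun k => ((k.1:ℝ)^2+(k.2:ℝ)^2)⁻¹

noncomputable def latbox (n : ℕ) : Finset (ℤ×ℤ) := Finset.Icc (-(n:ℤ)) n ×ˢ Finset.Icc (-(n:ℤ)) n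

lemma Hsym_sum (n : ℕ) (m : ℕ) :
    ∑ j ∈ Finset.Icc (-(m:ℤ)) m, ((n:ℝ)^2+(j:ℝ)^2)⁻¹ =
      ((n:ℝ)^2)⁻¹ + 2 * ∑ j ∈ Finset.range m, ((n:ℝ)^2+((j:ℝ)+1)^2)⁻¹ := by
  induction m with
  | zero => simp
  | succ m ih =>
    have h1 : Finset.Icc (-((m:ℤ)+1)) ((m:ℤ)+1) =
        insert (-((m:ℤ)+1)) (insert ((m:ℤ)+1) (Finset.Icc (-(m:ℤ)) m)) := by
      ext x
      simp only [Finset.mem_Icc, Finset.mem_insert]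
      omega
    have hcast : ((m+1 : ℕ) : ℤ) = (m:ℤ)+1 := by push_cast; ring
    rw [hcast, h1, Finset.sum_insert, Finset.sum_insert, ih, Finset.sum_range_succ]
    · have hb : ∀ x:ℕ, ((n:ℝ)^2+((x:ℝ)+1)^2)⁻¹ = (1 + (n:ℝ)^2 + (x:ℝ)*2 + (x:ℝ)^2)⁻¹ :=
        fun x => by ring_nf
      push_cast
      ring_nf
    · simp only [Finset.mem_Icc]; omega
    · simp only [Finset.mem_insert, Finset.mem_Icc]; omega

lemma shell_eq (n : ℕ) (hn : 1 ≤ n) :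
    ∑ k ∈ latbox n \ latbox (n-1), G k =
      4 * ∑ j ∈ Finset.range n,
        (((n:ℝ)^2+(j:ℝ)^2)⁻¹ + ((n:ℝ)^2+((j:ℝ)+1)^2)⁻¹) := by
  have hsplit : latbox n \ latbox (n-1) =
      (({-(n:ℤ), (n:ℤ)} : Finset ℤ) ×ˢ Finset.Icc (-(n:ℤ)) n) ∪
      (Finset.Icc (-(n:ℤ)+1) ((n:ℤ)-1) ×ˢ ({-(n:ℤ), (n:ℤ)} : Finset ℤ)) := by
    ext k
    simp only [latbox, Finset.mem_sdiff, Finset.mem_product, Finset.mem_Icc, Finset.mem_union,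
      Finset.mem_insert, Finset.mem_singleton]
    have hc : ((n-1 : ℕ) : ℤ) = (n:ℤ)-1 := by omega
    rw [hc]
    omega
  have hdisj : Disjoint (({-(n:ℤ), (n:ℤ)} : Finset ℤ) ×ˢ Finset.Icc (-(n:ℤ)) n)
      (Finset.Icc (-(n:ℤ)+1) ((n:ℤ)-1) ×ˢ ({-(n:ℤ), (n:ℤ)} : Finset ℤ)) := by
    rw [Finset.disjoint_left]
    intro k hk hk2
    simp only [Finset.mem_product, Finset.mem_Icc, Finset.mem_insert, Finset.mem_singleton] at hk hk2
    omega
  have hne : -(n:ℤ) ≠ (n:ℤ) := by omega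
  rw [hsplit, Finset.sum_union hdisj]
  rw [Finset.sum_product, Finset.sum_product]
  rw [Finset.sum_insert (by simpa using hne), Finset.sum_singleton]
  have e1 : ∀ b : ℤ, G (-(n:ℤ), b) = ((n:ℝ)^2+(b:ℝ)^2)⁻¹ := by
    intro b; simp only [G]; push_cast; ring_nf
  have e2 : ∀ b : ℤ, G ((n:ℤ), b) = ((n:ℝ)^2+(b:ℝ)^2)⁻¹ := by
    intro b; simp only [G]; push_cast; ring_nf
  have e3 : ∀ a : ℤ, (∑ b ∈ ({-(n:ℤ), (n:ℤ)} : Finset ℤ), G (a, b))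
      = 2 * ((n:ℝ)^2+(a:ℝ)^2)⁻¹ := by
    intro a
    rw [Finset.sum_insert (by simpa using hne), Finset.sum_singleton]
    simp only [G]; push_cast; ring_nf
  simp only [e1, e2, e3]
  obtain ⟨m, rfl⟩ : ∃ m, n = m + 1 := ⟨n-1, by omega⟩
  have hm1 : m + 1 - 1 = m := by omega
  have hIcc : Finset.Icc (-((m+1:ℕ):ℤ)+1) (((m+1:ℕ):ℤ)-1) = Finset.Icc (-(m:ℤ)) (m:ℤ) := by
    congr 1 <;> push_cast <;> ring
  rw [hIcc, ← Finset.mul_sum, Hsym_sum (m+1) (m+1), Hsym_sum (m+1) m]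
  rw [Finset.sum_add_distrib,
    Finset.sum_range_succ' (fun j => ((((m+1:ℕ)):ℝ)^2+(j:ℝ)^2)⁻¹) m]
  have hc : ∀ x : ℕ, ((((m+1:ℕ)):ℝ)^2+((x+1:ℕ):ℝ)^2)⁻¹ = ((((m+1:ℕ)):ℝ)^2+((x:ℝ)+1)^2)⁻¹ := by
    intro x; push_cast; ring_nf
  simp only [hc, Nat.cast_zero]
  push_cast
  ring

noncomputable def boxsum (n : ℕ) : ℝ := ∑ k ∈ latbox n, G k

lemma G_nonneg (k : ℤ × ℤ) : 0 ≤ G k := by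
  simp only [G]; positivity

lemma latbox_mono {n : ℕ} : latbox n ⊆ latbox (n+1) := by
  apply Finset.product_subset_product <;>
  · apply Finset.Icc_subset_Icc <;> push_cast <;> omega

lemma boxsum_succ (n : ℕ) :
    boxsum (n+1) = boxsum n + ∑ k ∈ latbox (n+1) \ latbox n, G k := by
  rw [boxsum, boxsum, ← Finset.sum_sdiff (latbox_mono (n := n))]
  ring

lemma shell_bound (n : ℕ) (hn : 1 ≤ n) :
    ∑ k ∈ latbox n \ latbox (n-1), G k ≤ 2*π/(n:ℝ) + 8/(3*(n:ℝ)^3) := by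
  rw [shell_eq n hn]
  have h := sum_pairs n hn
  have hn0 : (0:ℝ) < (n:ℝ) := by exact_mod_cast hn
  have : 4 * (π/(2*(n:ℝ)) + 2/(3*(n:ℝ)^3)) = 2*π/(n:ℝ) + 8/(3*(n:ℝ)^3) := by
    field_simp; ring
  linarith

lemma boxsum_zero : boxsum 0 = 0 := by
  have : latbox 0 = {((0:ℤ),(0:ℤ))} := by
    ext k
    simp only [latbox, Finset.mem_product, Finset.mem_Icc, Finset.mem_singleton, Prod.ext_iff]
    omega
  rw [boxsum, this, Finset.sum_singleton]
  simp [G]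

lemma boxsum_two : boxsum 2 = 9.1 := by
  have h1 : boxsum 1 = boxsum 0 + ∑ k ∈ latbox 1 \ latbox 0, G k := boxsum_succ 0
  have h2 : boxsum 2 = boxsum 1 + ∑ k ∈ latbox 2 \ latbox 1, G k := boxsum_succ 1
  rw [h2, h1, boxsum_zero, shell_eq 1 (by norm_num), shell_eq 2 (by norm_num)]
  norm_num [Finset.sum_range_succ]

lemma log_ge {x : ℝ} (hx : 0 < x) : 1 - 1/x ≤ Real.log x := by
  have h := Real.log_le_sub_one_of_pos (show (0:ℝ) < 1/x by positivity)
  rw [one_div, Real.log_inv] at h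
  rw [one_div]
  linarith

lemma log_step {n : ℕ} (hn : 1 ≤ n) : 1/((n:ℝ)+1) ≤ Real.log ((n:ℝ)+1) - Real.log (n:ℝ) := by
  have hn0 : (0:ℝ) < (n:ℝ) := by exact_mod_cast hn
  have h := log_ge (show (0:ℝ) < ((n:ℝ)+1)/(n:ℝ) by positivity)
  rw [Real.log_div (by positivity) (ne_of_gt hn0)] at h
  have : 1 - 1/(((n:ℝ)+1)/(n:ℝ)) = 1/((n:ℝ)+1) := by
    field_simp
    ring
  linarith [this ▸ h]

lemma boxsum_main : ∀ N : ℕ, 4 ≤ N →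
    boxsum N ≤ 9.1 + 7*π/6 + 91/648 + 1/15 - (4/3)/((N:ℝ)*((N:ℝ)+1))
      + 2*π*(Real.log (N:ℝ) - Real.log 4) := by
  intro N hN
  induction N, hN using Nat.le_induction with
  | base =>
    have h3 : boxsum 3 = boxsum 2 + ∑ k ∈ latbox 3 \ latbox 2, G k := boxsum_succ 2
    have h4 : boxsum 4 = boxsum 3 + ∑ k ∈ latbox 4 \ latbox 3, G k := boxsum_succ 3
    have s3 := shell_bound 3 (by norm_num)
    have s4 := shell_bound 4 (by norm_num)
    norm_num at s3 s4 ⊢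
    rw [h4, h3, boxsum_two]
    have hπ : (0:ℝ) < π := Real.pi_pos
    norm_num
    nlinarith [s3, s4]
  | succ n hn ih =>
    have hsucc : boxsum (n+1) = boxsum n + ∑ k ∈ latbox (n+1) \ latbox n, G k := boxsum_succ n
    have hs := shell_bound (n+1) (by omega)
    have hco : ((n+1:ℕ):ℝ) = (n:ℝ)+1 := by push_cast; ring
    rw [hco] at hs
    norm_num at hs
    have hlog := log_step (show 1 ≤ n by omega)
    have hn0 : (4:ℝ) ≤ (n:ℝ) := by exact_mod_cast hn
    have herr : 8/(3*((n:ℝ)+1)^3) ≤ (4/3)/((n:ℝ)*((n:ℝ)+1)) - (4/3)/(((n:ℝ)+1)*((n:ℝ)+2)) := by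
      have h1 : (0:ℝ) < (n:ℝ) := by linarith
      rw [div_sub_div _ _ (by positivity) (by positivity), div_le_div_iff₀ (by positivity) (by positivity)]
      ring_nf
      nlinarith
    have hπ : (0:ℝ) < π := Real.pi_pos
    have hlog2 : 2*π/((n:ℝ)+1) ≤ 2*π*(Real.log ((n:ℝ)+1) - Real.log (n:ℝ)) := by
      have := mul_le_mul_of_nonneg_left hlog (show (0:ℝ) ≤ 2*π by positivity)
      calc 2*π/((n:ℝ)+1) = 2*π*(1/((n:ℝ)+1)) := by ring
        _ ≤ _ := this
    rw [hsucc, hco]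
    have := add_le_add ih hs
    have hid : 2*π*(Real.log ((n:ℝ)+1) - Real.log 4) =
        2*π*(Real.log (n:ℝ) - Real.log 4) + 2*π*(Real.log ((n:ℝ)+1) - Real.log (n:ℝ)) := by ring
    have hgoal : ((n:ℝ)+1)*((n:ℝ)+1+1) = ((n:ℝ)+1)*((n:ℝ)+2) := by ring
    rw [hid, hgoal]
    linarith

lemma sqrt_two_inv_ge : (0.7:ℝ) ≤ 1 / Real.sqrt 2 := by
  have h2 : (0:ℝ) < Real.sqrt 2 := Real.sqrt_pos.mpr (by norm_num)
  rw [le_div_iff₀ h2]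
  nlinarith [Real.sq_sqrt (show (0:ℝ) ≤ 2 by norm_num), Real.sqrt_nonneg 2]

lemma log27_lb : (0.95240:ℝ) ≤ Real.log (2.7:ℝ) := by
  have h : Real.log (2.7:ℝ) = Real.log 2 + Real.log (1.35:ℝ) := by
    rw [← Real.log_mul (by norm_num) (by norm_num)]
    norm_num
  have h1 := log_ge (show (0:ℝ) < 1.35 by norm_num)
  have h2 := Real.log_two_gt_d9
  rw [h]
  norm_num at h1 ⊢
  linarith

lemma log37_lb : (1.15260:ℝ) ≤ Real.log (3.7:ℝ) := by
  have h : Real.log (3.7:ℝ) = Real.log 2 + Real.log (1.85:ℝ) := by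
    rw [← Real.log_mul (by norm_num) (by norm_num)]
    norm_num
  have h1 := log_ge (show (0:ℝ) < 1.85 by norm_num)
  have h2 := Real.log_two_gt_d9
  rw [h]
  norm_num at h1 ⊢
  linarith

lemma boxsum_three : boxsum 3 ≤ 9.1 + 2*π/3 + 8/81 := by
  have h3 : boxsum 3 = boxsum 2 + ∑ k ∈ latbox 3 \ latbox 2, G k := boxsum_succ 2
  have s3 := shell_bound 3 (by norm_num)
  rw [h3, boxsum_two]
  norm_num at s3 ⊢
  linarith

theorem stmt3 (r : ℝ) (hr : 2 ≤ r) :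
    (∑' k : ℤ × ℤ,
        if k ≠ 0 ∧ Real.sqrt ((k.1 : ℝ) ^ 2 + (k.2 : ℝ) ^ 2) ≤ r then
          ((k.1 : ℝ) ^ 2 + (k.2 : ℝ) ^ 2)⁻¹
        else 0) ≤
      4.4 + 2 * π * Real.log (r + 1 / Real.sqrt 2) := by
  have hr0 : (0:ℝ) ≤ r := by linarith
  set N : ℕ := ⌊r⌋₊ with hNdef
  have hN2 : 2 ≤ N := Nat.le_floor (by exact_mod_cast hr)
  have hNr : (N:ℝ) ≤ r := Nat.floor_le hr0
  have hrN1 : r < (N:ℝ)+1 := Nat.lt_floor_add_one r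
  have hsq2 := sqrt_two_inv_ge
  have hzero : ∀ k : ℤ×ℤ, k ∉ latbox N →
      (if k ≠ 0 ∧ Real.sqrt ((k.1 : ℝ) ^ 2 + (k.2 : ℝ) ^ 2) ≤ r then
        ((k.1 : ℝ) ^ 2 + (k.2 : ℝ) ^ 2)⁻¹ else 0) = 0 := by
    intro k hk
    rw [if_neg]
    rintro ⟨-, hle⟩
    simp only [latbox, Finset.mem_product, Finset.mem_Icc] at hk
    have hcase : ((N:ℤ)+1 ≤ k.1 ∨ k.1 ≤ -((N:ℤ)+1)) ∨ ((N:ℤ)+1 ≤ k.2 ∨ k.2 ≤ -((N:ℤ)+1)) := by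
      omega
    have hbig : ((N:ℝ)+1)^2 ≤ (k.1:ℝ)^2 + (k.2:ℝ)^2 := by
      have c1 : ((N:ℤ)+1 ≤ k.1 → ((N:ℝ)+1 ≤ (k.1:ℝ))) := by intro h; exact_mod_cast h
      have c2 : (k.1 ≤ -((N:ℤ)+1) → ((k.1:ℝ) ≤ -((N:ℝ)+1))) := by intro h; exact_mod_cast h
      have c3 : ((N:ℤ)+1 ≤ k.2 → ((N:ℝ)+1 ≤ (k.2:ℝ))) := by intro h; exact_mod_cast h
      have c4 : (k.2 ≤ -((N:ℤ)+1) → ((k.2:ℝ) ≤ -((N:ℝ)+1))) := by intro h; exact_mod_cast h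
      have hN0 : (0:ℝ) ≤ (N:ℝ) := Nat.cast_nonneg N
      rcases hcase with (h|h)|(h|h)
      · nlinarith [c1 h, sq_nonneg (k.2:ℝ)]
      · nlinarith [c2 h, sq_nonneg (k.2:ℝ)]
      · nlinarith [c3 h, sq_nonneg (k.1:ℝ)]
      · nlinarith [c4 h, sq_nonneg (k.1:ℝ)]
    have : (N:ℝ)+1 ≤ Real.sqrt ((k.1:ℝ)^2 + (k.2:ℝ)^2) := by
      have h1 : Real.sqrt (((N:ℝ)+1)^2) ≤ Real.sqrt ((k.1:ℝ)^2 + (k.2:ℝ)^2) :=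
        Real.sqrt_le_sqrt hbig
      rwa [Real.sqrt_sq (by positivity)] at h1
    linarith
  rw [tsum_eq_sum hzero]
  have hle_box : (∑ k ∈ latbox N,
      if k ≠ 0 ∧ Real.sqrt ((k.1 : ℝ) ^ 2 + (k.2 : ℝ) ^ 2) ≤ r then
        ((k.1 : ℝ) ^ 2 + (k.2 : ℝ) ^ 2)⁻¹ else 0) ≤ boxsum N := by
    apply Finset.sum_le_sum
    intro k _
    split_ifs with h
    · exact le_of_eq rfl
    · exact G_nonneg k
  have hπ := Real.pi_gt_d6
  have hπ' := Real.pi_lt_d6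
  have hl2 := Real.log_two_gt_d9
  rcases lt_or_ge N 4 with h4 | h4
  · interval_cases N
    · -- N = 2
      have hL : Real.log (2.7:ℝ) ≤ Real.log (r + 1/Real.sqrt 2) :=
        Real.log_le_log (by norm_num) (by linarith)
      have := log27_lb
      rw [boxsum_two] at hle_box
      have hmul : (3.141592:ℝ) * 0.95240 ≤ π * Real.log (r + 1/Real.sqrt 2) := by
        apply mul_le_mul (le_of_lt hπ) (by linarith) (by norm_num) (by linarith)
      norm_num at hle_box hmul ⊢
      linarith
    · -- N = 3
      have hr3 : (3:ℝ) ≤ r := by exact_mod_cast hNr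
      have hL : Real.log (3.7:ℝ) ≤ Real.log (r + 1/Real.sqrt 2) :=
        Real.log_le_log (by norm_num) (by linarith)
      have := log37_lb
      have hb3 := boxsum_three
      have hmul : (3.141592:ℝ) * 1.15260 ≤ π * Real.log (r + 1/Real.sqrt 2) := by
        apply mul_le_mul (le_of_lt hπ) (by linarith) (by norm_num) (by linarith)
      norm_num at hb3 hle_box hmul ⊢
      nlinarith
  · -- N ≥ 4
    have hmain := boxsum_main N h4
    have hN0 : (0:ℝ) < (N:ℝ) := by
      have : (0:ℕ) < N := by omega
      exact_mod_cast this
    have hlogN : Real.log (N:ℝ) ≤ Real.log (r + 1/Real.sqrt 2) :=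
      Real.log_le_log hN0 (by linarith)
    have hlog4 : Real.log (4:ℝ) = 2 * Real.log 2 := by
      rw [show (4:ℝ) = 2^2 by norm_num, Real.log_pow]
      push_cast; ring
    have hdrop : (0:ℝ) ≤ (4/3)/((N:ℝ)*((N:ℝ)+1)) := by positivity
    have hkey : 2*π*(Real.log (N:ℝ) - Real.log 4) ≤
        2*π*Real.log (r + 1/Real.sqrt 2) - 4*π*Real.log 2 := by
      rw [hlog4]
      nlinarith [Real.pi_pos, mul_le_mul_of_nonneg_left hlogN
        (show (0:ℝ) ≤ 2*π by positivity)]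
    have hmul : (3.141592:ℝ) * 0.6931471803 ≤ π * Real.log 2 := by
      apply mul_le_mul (le_of_lt hπ) (le_of_lt hl2) (by norm_num) (by linarith)
    calc (∑ k ∈ latbox N,
        if k ≠ 0 ∧ Real.sqrt ((k.1 : ℝ) ^ 2 + (k.2 : ℝ) ^ 2) ≤ r then
          ((k.1 : ℝ) ^ 2 + (k.2 : ℝ) ^ 2)⁻¹ else 0) ≤ boxsum N := hle_box
      _ ≤ 4.4 + 2 * π * Real.log (r + 1 / Real.sqrt 2) := by
          linarith [hkey, hdrop, hmul, hπ', hmain]
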